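/- Let f ∈ L^1(ℝ). Then there is a constant c₁ > 0, independent of f and t, such that for all t > 0, sup_{λ∈ℝ} [ min{1,(λt)²} · |f̂(λ)| ] ≤ c₁ · Ω₁[f](t), where Ω₁[f](t) = sup_{0<h<t} ‖f(·+h)+f(·−h)−2f(·)‖_{L¹(ℝ)}. -/

import Mathlib

open MeasureTheory Real Set

/-- The one-dimensional Fourier transform `f̂(λ) = ∫ f(x) e^{-iλx} dx`. -/
noncomputable def fourierTransform1d (f : ℝ → ℂ) (l : ℝ) : ℂ :=
  ∫ x : ℝ, Complex.exp (-(Complex.I * l * x)) * f x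

/-- The `L^p`-modulus of continuity based on symmetric second-order differences:
`Ω_p[f](t) = sup_{0<h<t} ‖f(·+h)+f(·−h)−2f(·)‖_{L^p(ℝ)}`. -/
noncomputable def secondModulus (p : ℝ) (f : ℝ → ℂ) (t : ℝ) : ℝ :=
  (⨆ h ∈ Set.Ioo (0:ℝ) t,
    eLpNorm (fun x => f (x + h) + f (x - h) - 2 * f x) (ENNReal.ofReal p) volume).toReal

lemma kernel_norm (l x : ℝ) : ‖Complex.exp (-(Complex.I * l * x))‖ = 1 := by
  rw [Complex.norm_exp]
  simp

lemma integrable_kernel_mul {f : ℝ → ℂ} (hf : Integrable f volume) (l : ℝ) :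
    Integrable (fun x : ℝ => Complex.exp (-(Complex.I * l * x)) * f x) volume :=
  hf.bdd_mul (Complex.continuous_exp.comp (by continuity)).aestronglyMeasurable
    (Filter.Eventually.of_forall fun x => le_of_eq (kernel_norm l x))

lemma translate_integrable {f : ℝ → ℂ} (hf : Integrable f volume) (h : ℝ) :
    Integrable (fun x : ℝ => f (x + h)) volume :=
  ((measurePreserving_add_right volume h).integrable_comp_emb
    (MeasurableEquiv.addRight h).measurableEmbedding).mpr hf

lemma shift_integral (f : ℝ → ℂ) (l h : ℝ) :
    (∫ x : ℝ, Complex.exp (-(Complex.I * l * x)) * f (x + h))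
      = Complex.exp (Complex.I * l * h) * fourierTransform1d f l := by
  have h1 : (∫ x : ℝ, Complex.exp (-(Complex.I * l * ((x + h : ℝ) : ℂ))) * f (x + h))
      = fourierTransform1d f l := by
    have := (measurePreserving_add_right volume h).integral_comp
      (MeasurableEquiv.addRight h).measurableEmbedding
      (fun y : ℝ => Complex.exp (-(Complex.I * l * y)) * f y)
    exact this
  rw [← h1, ← integral_const_mul]
  congr 1; funext x
  rw [← mul_assoc, ← Complex.exp_add]
  congr 2
  push_cast; ring

lemma diff_transform {f : ℝ → ℂ} (hf : Integrable f volume) (l h : ℝ) :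
    fourierTransform1d (fun x => f (x + h) + f (x - h) - 2 * f x) l
      = (Complex.exp (Complex.I * l * h) + Complex.exp (-(Complex.I * l * h)) - 2)
          * fourierTransform1d f l := by
  have i1 := integrable_kernel_mul (translate_integrable hf h) l
  have i2 : Integrable (fun x : ℝ => Complex.exp (-(Complex.I * l * x)) * f (x - h)) volume := by
    simpa [sub_eq_add_neg] using integrable_kernel_mul (translate_integrable hf (-h)) l
  have i3 : Integrable (fun x : ℝ => Complex.exp (-(Complex.I * l * x)) * (2 * f x)) volume := by
    simpa [mul_left_comm] using (integrable_kernel_mul hf l).const_mul 2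
  have e2 : (∫ x : ℝ, Complex.exp (-(Complex.I * l * x)) * f (x - h))
      = Complex.exp (-(Complex.I * l * h)) * fourierTransform1d f l := by
    have := shift_integral f l (-h)
    simp only [sub_eq_add_neg]
    rw [this]
    congr 2
    push_cast; ring
  have e3 : (∫ x : ℝ, Complex.exp (-(Complex.I * l * x)) * (2 * f x))
      = 2 * fourierTransform1d f l := by
    rw [fourierTransform1d, ← integral_const_mul]
    congr 1; funext x; ring
  have i12 : Integrable (fun x : ℝ => Complex.exp (-(Complex.I * l * x)) * f (x + h)
      + Complex.exp (-(Complex.I * l * x)) * f (x - h)) volume := i1.add i2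
  have esum : (∫ x : ℝ, (Complex.exp (-(Complex.I * l * x)) * f (x + h)
        + Complex.exp (-(Complex.I * l * x)) * f (x - h)))
      = (∫ x : ℝ, Complex.exp (-(Complex.I * l * x)) * f (x + h))
        + ∫ x : ℝ, Complex.exp (-(Complex.I * l * x)) * f (x - h) := integral_add i1 i2
  unfold fourierTransform1d
  simp_rw [mul_sub, mul_add]
  rw [integral_sub i12 i3, esum, shift_integral, e2, e3]
  show _ = _ * fourierTransform1d f l
  ring


lemma translate_aesm {f : ℝ → ℂ} (hf : Integrable f volume) (h : ℝ) :
    AEStronglyMeasurable (fun x : ℝ => f (x + h)) volume :=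
  (translate_integrable hf h).aestronglyMeasurable

lemma eLpNorm_translate {f : ℝ → ℂ} (hf : Integrable f volume) (h : ℝ) :
    eLpNorm (fun x : ℝ => f (x + h)) 1 volume = eLpNorm f 1 volume :=
  eLpNorm_comp_measurePreserving hf.aestronglyMeasurable
    (measurePreserving_add_right volume h)

lemma sup_ne_top {f : ℝ → ℂ} (hf : Integrable f volume) (t : ℝ) :
    (⨆ h ∈ Set.Ioo (0:ℝ) t,
      eLpNorm (fun x => f (x + h) + f (x - h) - 2 * f x) 1 volume) ≠ ⊤ := by
  have hb : (⨆ h ∈ Set.Ioo (0:ℝ) t,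
      eLpNorm (fun x => f (x + h) + f (x - h) - 2 * f x) 1 volume)
      ≤ 4 * eLpNorm f 1 volume := by
    refine iSup₂_le fun h _ => ?_
    have a1 := translate_aesm hf h
    have a2 : AEStronglyMeasurable (fun x : ℝ => f (x - h)) volume := by
      simpa [sub_eq_add_neg] using translate_aesm hf (-h)
    have a3 : AEStronglyMeasurable (fun x : ℝ => (2:ℂ) * f x) volume :=
      hf.aestronglyMeasurable.const_mul 2
    calc eLpNorm (fun x => f (x + h) + f (x - h) - 2 * f x) 1 volume
        ≤ eLpNorm (fun x => f (x + h) + f (x - h)) 1 volume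
            + eLpNorm (fun x : ℝ => (2:ℂ) * f x) 1 volume :=
          eLpNorm_sub_le (a1.add a2) a3 le_rfl
      _ ≤ (eLpNorm (fun x : ℝ => f (x + h)) 1 volume
            + eLpNorm (fun x : ℝ => f (x - h)) 1 volume)
            + eLpNorm (fun x : ℝ => (2:ℂ) * f x) 1 volume := by
          gcongr
          exact eLpNorm_add_le a1 a2 le_rfl
      _ ≤ (eLpNorm f 1 volume + eLpNorm f 1 volume)
            + (eLpNorm f 1 volume + eLpNorm f 1 volume) := by
          gcongr
          · exact le_of_eq (eLpNorm_translate hf h)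
          · rw [show (fun x : ℝ => f (x - h)) = fun x : ℝ => f (x + (-h)) by
              funext x; rw [sub_eq_add_neg]]
            exact le_of_eq (eLpNorm_translate hf (-h))
          · calc eLpNorm (fun x : ℝ => (2:ℂ) * f x) 1 volume
                = eLpNorm (fun x : ℝ => f x + f x) 1 volume := by
                  congr 1; funext x; ring
              _ ≤ eLpNorm f 1 volume + eLpNorm f 1 volume :=
                  eLpNorm_add_le hf.aestronglyMeasurable hf.aestronglyMeasurable le_rfl
      _ = 4 * eLpNorm f 1 volume := by ring
  have hfin : eLpNorm f 1 volume < ⊤ := (memLp_one_iff_integrable.mpr hf).2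
  exact ne_top_of_le_ne_top (ENNReal.mul_ne_top (by norm_num) hfin.ne) hb

lemma contrast {f : ℝ → ℂ} (hf : Integrable f volume) {t h : ℝ}
    (hh : h ∈ Set.Ioo (0:ℝ) t) (l : ℝ) :
    (2 - 2 * Real.cos (l * h)) * ‖fourierTransform1d f l‖ ≤ secondModulus 1 f t := by
  set Δ : ℝ → ℂ := fun x => f (x + h) + f (x - h) - 2 * f x with hΔdef
  have hΔ : Integrable Δ volume := by
    refine ((translate_integrable hf h).add ?_).sub (hf.const_mul 2)
    simpa [sub_eq_add_neg] using translate_integrable hf (-h)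
  -- norm bound on the Fourier transform of Δ
  have hb1 : ‖fourierTransform1d Δ l‖ ≤ (eLpNorm Δ 1 volume).toReal := by
    calc ‖fourierTransform1d Δ l‖
        ≤ ∫ x : ℝ, ‖Complex.exp (-(Complex.I * l * x)) * Δ x‖ :=
          norm_integral_le_integral_norm _
      _ = ∫ x : ℝ, ‖Δ x‖ := by
          congr 1; funext x; rw [norm_mul, kernel_norm, one_mul]
      _ = (eLpNorm Δ 1 volume).toReal := by
          rw [integral_norm_eq_lintegral_enorm hΔ.aestronglyMeasurable,
            eLpNorm_one_eq_lintegral_enorm]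
  -- identity
  have hid : ‖fourierTransform1d Δ l‖
      = (2 - 2 * Real.cos (l * h)) * ‖fourierTransform1d f l‖ := by
    rw [hΔdef, diff_transform hf l h, norm_mul]
    congr 1
    have : Complex.exp (Complex.I * l * h) + Complex.exp (-(Complex.I * l * h)) - 2
        = ((2 * Real.cos (l * h) - 2 : ℝ) : ℂ) := by
      have hc : Complex.cos ((l : ℂ) * h) =
          (Complex.exp (Complex.I * l * h) + Complex.exp (-(Complex.I * l * h))) / 2 := by
        rw [Complex.cos]
        ring_nf
      push_cast
      rw [hc]
      ring
    rw [this, Complex.norm_real, Real.norm_eq_abs,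
      abs_of_nonpos (by nlinarith [Real.cos_le_one (l * h)])]
    ring
  -- compare to the supremum
  have hle : eLpNorm Δ 1 volume
      ≤ ⨆ h ∈ Set.Ioo (0:ℝ) t,
          eLpNorm (fun x => f (x + h) + f (x - h) - 2 * f x) 1 volume := by
    exact le_biSup (fun h => eLpNorm (fun x => f (x + h) + f (x - h) - 2 * f x) 1 volume) hh
  have : (eLpNorm Δ 1 volume).toReal ≤ secondModulus 1 f t := by
    rw [secondModulus]
    simp only [ENNReal.ofReal_one]
    exact ENNReal.toReal_mono (sup_ne_top hf t) hle
  rw [hid] at hb1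
  linarith

/-- for `f ∈ L¹(ℝ)`,
`sup_λ [min{1,(λt)²}·|f̂(λ)|] ≤ c₁·Ω₁[f](t)` with `c₁` independent of `f` and `t`. -/
theorem riemann_lebesgue_quantitative_L1 :
    ∃ c₁ : ℝ, 0 < c₁ ∧
      ∀ (f : ℝ → ℂ), Integrable f volume →
        ∀ t : ℝ, 0 < t →
          ∀ l : ℝ,
            min 1 ((|l| * t) ^ 2) * ‖fourierTransform1d f l‖ ≤ c₁ * secondModulus 1 f t := by
  refine ⟨10, by norm_num, fun f hf t ht l => ?_⟩
  have hmod : 0 ≤ secondModulus 1 f t := ENNReal.toReal_nonneg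
  have hnorm : 0 ≤ ‖fourierTransform1d f l‖ := norm_nonneg _
  rcases eq_or_ne l 0 with rfl | hl
  · simp only [abs_zero, zero_mul]
    norm_num
    linarith
  · have hlpos : 0 < |l| := abs_pos.mpr hl
    by_cases hcase : |l| * t ≤ π
    · -- small frequency: take h = t/2
      have hπ0 : 0 < π := Real.pi_pos
      have hπ : π < 3.15 := Real.pi_lt_d2
      have hh : t / 2 ∈ Set.Ioo (0:ℝ) t := ⟨by linarith, by linarith⟩
      have hc := contrast hf hh l
      have habs : |l * (t / 2)| ≤ π := by
        rw [abs_mul, abs_of_pos (by linarith : (0:ℝ) < t / 2)]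
        nlinarith
      have hcos := Real.cos_le_one_sub_mul_cos_sq habs
      have h4 : 2 * (l * (t / 2)) ^ 2 ≤ π ^ 2 * (1 - Real.cos (l * (t / 2))) := by
        have hπ2 : (0:ℝ) < π ^ 2 := by positivity
        have h5 : 2 / π ^ 2 * (l * (t / 2)) ^ 2 ≤ 1 - Real.cos (l * (t / 2)) := by linarith
        calc 2 * (l * (t / 2)) ^ 2 = π ^ 2 * (2 / π ^ 2 * (l * (t / 2)) ^ 2) := by
              field_simp
          _ ≤ π ^ 2 * (1 - Real.cos (l * (t / 2))) :=
              mul_le_mul_of_nonneg_left h5 hπ2.le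
      have h1 : (|l| * t) ^ 2 = 4 * (l * (t / 2)) ^ 2 := by
        rw [mul_pow, sq_abs]; ring
      have key : min 1 ((|l| * t) ^ 2) ≤ 10 * (2 - 2 * Real.cos (l * (t / 2))) := by
        refine le_trans (min_le_right _ _) ?_
        have hπ10 : π ^ 2 < 10 := by nlinarith
        nlinarith [Real.cos_le_one (l * (t / 2))]
      calc min 1 ((|l| * t) ^ 2) * ‖fourierTransform1d f l‖
          ≤ (10 * (2 - 2 * Real.cos (l * (t / 2)))) * ‖fourierTransform1d f l‖ :=
            mul_le_mul_of_nonneg_right key hnorm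
        _ = 10 * ((2 - 2 * Real.cos (l * (t / 2))) * ‖fourierTransform1d f l‖) := by ring
        _ ≤ 10 * secondModulus 1 f t := by linarith
    · -- large frequency: take h = π / |l|
      push_neg at hcase
      have hπ0 : 0 < π := Real.pi_pos
      have hh0 : 0 < π / |l| := by positivity
      have hht : π / |l| < t := by
        rw [div_lt_iff₀ hlpos]
        nlinarith
      have hc := contrast hf (⟨hh0, hht⟩ : π / |l| ∈ Set.Ioo (0:ℝ) t) l
      have habs : |l * (π / |l|)| = π := by
        rw [abs_mul, abs_of_pos hh0]
        field_simp
      have hcos : Real.cos (l * (π / |l|)) = -1 := by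
        rw [← Real.cos_abs, habs, Real.cos_pi]
      rw [hcos] at hc
      have hmin : min 1 ((|l| * t) ^ 2) = 1 :=
        min_eq_left (by nlinarith [Real.pi_gt_three])
      rw [hmin, one_mul]
      linarith
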